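/- The matrix R̄(u) has the explicit entrywise form R̄(u) = Σ_{i: i≠i′} e_{ii}⊗e_{ii} + ((u−1)/(qu−q^{-1}))·Σ_{i≠j, i≠j′} e_{ii}⊗e_{jj} + ((q−q^{-1})/(qu−q^{-1}))·Σ_{i>j, i≠j′} e_{ij}⊗e_{ji} + ((q−q^{-1})u/(qu−q^{-1}))·Σ_{i<j, i≠j′} e_{ij}⊗e_{ji} + (1/((u−q^{-2})(u−ξ)))·Σ_{i,j=1}^{N} a_{ij}(u)·e_{i′j′}⊗e_{ij}, where a_{ij}(u) = (q^{-2}u−ξ)(u−1) if i = j and i ≠ i′; a_{ij}(u) = q^{-1}(u−ξ)(u−1) + (ξ−1)(q^{-2}−1)u if i = j = i′; a_{ij}(u) = (q^{-2}−1)(q^{ī−j̄}ξ(u−1) − δ_{i,j′}(u−ξ)) if i < j; and a_{ij}(u) = (q^{-2}−1)u(q^{ī−j̄}(u−1) − δ_{i,j′}(u−ξ)) if i > j (δ denoting the Kronecker delta). -/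

import Mathlib

/-!
STATEMENT 9: the explicit entrywise form of the type `B_n` R-matrix `R̄(u)`,
over `ℂ(q^{1/2})(u)`.
-/

open Matrix
open scoped Kronecker

noncomputable section

set_option synthInstance.maxHeartbeats 1000000 in
instance : Field (RatFunc (RatFunc ℂ)) := inferInstance

set_option synthInstance.maxHeartbeats 400000
set_option maxHeartbeats 1000000

/-- The field `ℂ(q^{1/2})(u)`. -/
abbrev K : Type := RatFunc (RatFunc ℂ)

/-- The element `q^{1/2}`. -/
def qh : K := RatFunc.C RatFunc.X
/-- The indeterminate `u`. -/
def uu : K := RatFunc.X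
/-- `q = (q^{1/2})²`. -/
def qq : K := qh ^ 2

/-- Twice the "bar" value: `2·ī` for the index `i` (0-based) in type `B_n`, `N = 2n+1`. -/
def bar2 (n : ℕ) (i : Fin (2 * n + 1)) : ℤ :=
  if (i : ℕ) < n then 2 * (n : ℤ) - 2 * ((i : ℕ) : ℤ) - 1
  else if (i : ℕ) = n then 0
  else 2 * (n : ℤ) - 2 * ((i : ℕ) : ℤ) + 1

/-- Matrix units `e_{ij}`. -/
def EE (n : ℕ) (i j : Fin (2 * n + 1)) : Matrix (Fin (2 * n + 1)) (Fin (2 * n + 1)) K :=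
  Matrix.single i j 1

/-- `P = Σ_{i,j} e_{ij} ⊗ e_{ji}`. -/
def Pm (n : ℕ) :
    Matrix (Fin (2 * n + 1) × Fin (2 * n + 1)) (Fin (2 * n + 1) × Fin (2 * n + 1)) K :=
  ∑ i, ∑ j, EE n i j ⊗ₖ EE n j i

/-- `Q = Σ_{i,j} q^{ī−j̄} e_{i′j′} ⊗ e_{ij}`. -/
def Qm (n : ℕ) :
    Matrix (Fin (2 * n + 1) × Fin (2 * n + 1)) (Fin (2 * n + 1) × Fin (2 * n + 1)) K :=
  ∑ i, ∑ j, qh ^ (bar2 n i - bar2 n j) • (EE n i.rev j.rev ⊗ₖ EE n i j)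

/-- The constant R-matrix `R` of type `B_n`. -/
def Rm (n : ℕ) :
    Matrix (Fin (2 * n + 1) × Fin (2 * n + 1)) (Fin (2 * n + 1) × Fin (2 * n + 1)) K :=
  qq • ∑ i, (if i ≠ i.rev then EE n i i ⊗ₖ EE n i i else 0)
  + EE n ⟨n, by omega⟩ ⟨n, by omega⟩ ⊗ₖ EE n ⟨n, by omega⟩ ⟨n, by omega⟩
  + ∑ i, ∑ j, (if i ≠ j ∧ i ≠ j.rev then EE n i i ⊗ₖ EE n j j else 0)
  + qq⁻¹ • ∑ i, (if i ≠ i.rev then EE n i i ⊗ₖ EE n i.rev i.rev else 0)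
  + (qq - qq⁻¹) • ∑ i, ∑ j, (if i < j then EE n i j ⊗ₖ EE n j i else 0)
  - (qq - qq⁻¹) •
      ∑ i, ∑ j, (if j < i then qh ^ (bar2 n i - bar2 n j) • (EE n i.rev j.rev ⊗ₖ EE n i j)
        else 0)

/-- `ξ = q^{2−N}` with `N = 2n+1`. -/
def xib (n : ℕ) : K := qq ^ ((2 : ℤ) - (2 * (n : ℤ) + 1))

/-- `R̄(w) = ((w−1)/(wq−q^{-1}))R + ((q−q^{-1})/(wq−q^{-1}))P
           − ((q−q^{-1})(w−1)ξ)/((wq−q^{-1})(w−ξ))·Q`. -/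
def Rbar (n : ℕ) (w : K) :
    Matrix (Fin (2 * n + 1) × Fin (2 * n + 1)) (Fin (2 * n + 1) × Fin (2 * n + 1)) K :=
  ((w - 1) / (w * qq - qq⁻¹)) • Rm n
  + ((qq - qq⁻¹) / (w * qq - qq⁻¹)) • Pm n
  - ((qq - qq⁻¹) * (w - 1) * xib n / ((w * qq - qq⁻¹) * (w - xib n))) • Qm n


/-- The entries `a_{ij}(u)` of the lower-right block of `R̄(u)` (type `B`). -/
def aent (n : ℕ) (i j : Fin (2 * n + 1)) : K :=
  if i = j then
    (if i = i.rev then qq⁻¹ * (uu - xib n) * (uu - 1) + (xib n - 1) * (qq ^ (-2 : ℤ) - 1) * uu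
     else (qq ^ (-2 : ℤ) * uu - xib n) * (uu - 1))
  else if i < j then
    (qq ^ (-2 : ℤ) - 1) *
      (qh ^ (bar2 n i - bar2 n j) * xib n * (uu - 1) - (if i = j.rev then uu - xib n else 0))
  else
    (qq ^ (-2 : ℤ) - 1) * uu *
      (qh ^ (bar2 n i - bar2 n j) * (uu - 1) - (if i = j.rev then uu - xib n else 0))
/-! ### Auxiliary lemmas -/

lemma uu_ne_C (s : RatFunc ℂ) : uu ≠ RatFunc.C s := by
  unfold uu
  intro h
  have h2 := congrArg RatFunc.num h
  rw [RatFunc.num_X, RatFunc.num_C] at h2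
  exact Polynomial.X_ne_C s h2

lemma uu_sub_C_ne (s : RatFunc ℂ) : uu - RatFunc.C s ≠ 0 := by
  intro h
  exact uu_ne_C s (by linear_combination h)

lemma qhC : qh = RatFunc.C (RatFunc.X : RatFunc ℂ) := rfl

lemma qqC : qq = RatFunc.C ((RatFunc.X : RatFunc ℂ) ^ 2) := by
  rw [qq, qhC, map_pow]

lemma qq_ne : qq ≠ 0 := by
  rw [qqC]
  simp only [ne_eq, map_eq_zero]
  exact pow_ne_zero 2 RatFunc.X_ne_zero

lemma huq1 : uu * qq - qq⁻¹ ≠ 0 := by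
  intro h
  have hq := qq_ne
  have key : uu = qq⁻¹ * qq⁻¹ := by
    rw [sub_eq_zero] at h
    field_simp at h ⊢
    linear_combination h
  have h3 : qq⁻¹ * qq⁻¹
      = RatFunc.C (((RatFunc.X : RatFunc ℂ) ^ 2)⁻¹ * ((RatFunc.X : RatFunc ℂ) ^ 2)⁻¹) := by
    rw [_root_.map_mul, map_inv₀, ← qqC]
  exact uu_ne_C _ (key.trans h3)

lemma huq2 : qq * uu - qq⁻¹ ≠ 0 := by
  rw [mul_comm]; exact huq1

lemma hux : uu - xib n ≠ 0 := by
  have : xib n = RatFunc.C (((RatFunc.X : RatFunc ℂ) ^ 2) ^ ((2 : ℤ) - (2 * (n : ℤ) + 1))) := by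
    rw [xib, qqC, map_zpow₀]
  rw [this]; exact uu_sub_C_ne _

lemma hm2 : (qq : K) ^ (-2 : ℤ) = (qq * qq)⁻¹ := by
  rw [_root_.zpow_neg, mul_inv]
  norm_num [zpow_ofNat, sq]

lemma hum2 : uu - (qq * qq)⁻¹ ≠ 0 := by
  have : (qq * qq)⁻¹ = RatFunc.C ((((RatFunc.X : RatFunc ℂ) ^ 2) * ((RatFunc.X : RatFunc ℂ) ^ 2))⁻¹) := by
    rw [map_inv₀, _root_.map_mul, ← qqC]
  rw [this]; exact uu_sub_C_ne _

/-- `i.rev = i ↔ i` is the middle index. -/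
lemma mid_eq_iff {n : ℕ} (h : n < 2 * n + 1) (i : Fin (2 * n + 1)) :
    (⟨n, h⟩ : Fin (2 * n + 1)) = i ↔ i.rev = i := by
  rw [Fin.ext_iff, Fin.ext_iff, Fin.val_rev]
  have hi := i.is_lt
  have h2 : (⟨n, h⟩ : Fin (2 * n + 1)).val = n := rfl
  rw [h2]
  omega

lemma EE_kron_apply (n : ℕ) (i j k l : Fin (2*n+1)) (a b c d : Fin (2*n+1)) :
    (EE n i j ⊗ₖ EE n k l) (a,b) (c,d)
      = if i = a ∧ j = c ∧ k = b ∧ l = d then 1 else 0 := by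
  simp only [EE, Matrix.kroneckerMap_apply, Matrix.single, Matrix.of_apply]
  by_cases h1 : i = a <;> by_cases h2 : j = c <;> by_cases h3 : k = b <;> by_cases h4 : l = d <;>
    simp [h1, h2, h3, h4]

section masters
variable {n : ℕ}
variable (a b c d : Fin (2*n+1))

lemma masterA (P : Fin (2*n+1) → Fin (2*n+1) → Prop) [∀ i j, Decidable (P i j)]
    (f : Fin (2*n+1) → Fin (2*n+1) → K) :
    (∑ i, ∑ j, if P i j then f i j • (EE n i.rev j.rev ⊗ₖ EE n i j) else 0) (a,b) (c,d)
      = if b.rev = a ∧ d.rev = c ∧ P b d then f b d else 0 := by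
  simp only [Matrix.sum_apply]
  rw [Finset.sum_eq_single b]
  rotate_left
  · intro i _ hib
    apply Finset.sum_eq_zero; intro j _
    simp [apply_ite (fun M : Matrix (Fin (2*n+1) × Fin (2*n+1)) (Fin (2*n+1) × Fin (2*n+1)) K
      => M (a,b) (c,d)), Matrix.smul_apply, Matrix.kroneckerMap_apply, EE,
      Matrix.single, Matrix.of_apply, hib]
  · simp
  rw [Finset.sum_eq_single d]
  rotate_left
  · intro j _ hjd
    simp [apply_ite (fun M : Matrix (Fin (2*n+1) × Fin (2*n+1)) (Fin (2*n+1) × Fin (2*n+1)) K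
      => M (a,b) (c,d)), Matrix.smul_apply, Matrix.kroneckerMap_apply, EE,
      Matrix.single, Matrix.of_apply, hjd]
  · simp
  simp only [apply_ite (fun M : Matrix (Fin (2*n+1) × Fin (2*n+1)) (Fin (2*n+1) × Fin (2*n+1)) K
      => M (a,b) (c,d)), Matrix.smul_apply, EE_kron_apply, Matrix.zero_apply, smul_ite,
      smul_eq_mul, mul_one, smul_zero]
  split_ifs <;> first | rfl | tauto | (exfalso; grind) | simp_all

lemma masterA' (f : Fin (2*n+1) → Fin (2*n+1) → K) :
    (∑ i, ∑ j, f i j • (EE n i.rev j.rev ⊗ₖ EE n i j)) (a,b) (c,d)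
      = if b.rev = a ∧ d.rev = c then f b d else 0 := by
  have := masterA a b c d (fun _ _ => True) f
  simp only [if_true, and_true] at this
  rw [← this] <;> simp

lemma masterB (P : Fin (2*n+1) → Fin (2*n+1) → Prop) [∀ i j, Decidable (P i j)] :
    (∑ i, ∑ j, if P i j then EE n i j ⊗ₖ EE n j i else 0) (a,b) (c,d)
      = if d = a ∧ b = c ∧ P d b then 1 else 0 := by
  simp only [Matrix.sum_apply]
  rw [Finset.sum_eq_single d]
  rotate_left
  · intro i _ hid
    apply Finset.sum_eq_zero; intro j _
    simp [apply_ite (fun M : Matrix (Fin (2*n+1) × Fin (2*n+1)) (Fin (2*n+1) × Fin (2*n+1)) K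
      => M (a,b) (c,d)), Matrix.kroneckerMap_apply, EE,
      Matrix.single, Matrix.of_apply, hid]
  · simp
  rw [Finset.sum_eq_single b]
  rotate_left
  · intro j _ hjb
    simp [apply_ite (fun M : Matrix (Fin (2*n+1) × Fin (2*n+1)) (Fin (2*n+1) × Fin (2*n+1)) K
      => M (a,b) (c,d)), Matrix.kroneckerMap_apply, EE,
      Matrix.single, Matrix.of_apply, hjb]
  · simp
  simp only [apply_ite (fun M : Matrix (Fin (2*n+1) × Fin (2*n+1)) (Fin (2*n+1) × Fin (2*n+1)) K
      => M (a,b) (c,d)), EE_kron_apply, Matrix.zero_apply]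
  split_ifs <;> first | rfl | tauto | (exfalso; grind) | simp_all

lemma masterB' :
    (∑ i, ∑ j, EE n i j ⊗ₖ EE n j i) (a,b) (c,d) = if d = a ∧ b = c then 1 else 0 := by
  have := masterB a b c d (fun _ _ => True)
  simp only [if_true, and_true] at this
  rw [← this] <;> simp

lemma masterC (P : Fin (2*n+1) → Fin (2*n+1) → Prop) [∀ i j, Decidable (P i j)] :
    (∑ i, ∑ j, if P i j then EE n i i ⊗ₖ EE n j j else 0) (a,b) (c,d)
      = if a = c ∧ b = d ∧ P a b then 1 else 0 := by
  simp only [Matrix.sum_apply]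
  rw [Finset.sum_eq_single a]
  rotate_left
  · intro i _ hia
    apply Finset.sum_eq_zero; intro j _
    simp [apply_ite (fun M : Matrix (Fin (2*n+1) × Fin (2*n+1)) (Fin (2*n+1) × Fin (2*n+1)) K
      => M (a,b) (c,d)), Matrix.kroneckerMap_apply, EE,
      Matrix.single, Matrix.of_apply, hia]
  · simp
  rw [Finset.sum_eq_single b]
  rotate_left
  · intro j _ hjb
    simp [apply_ite (fun M : Matrix (Fin (2*n+1) × Fin (2*n+1)) (Fin (2*n+1) × Fin (2*n+1)) K
      => M (a,b) (c,d)), Matrix.kroneckerMap_apply, EE,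
      Matrix.single, Matrix.of_apply, hjb]
  · simp
  simp only [apply_ite (fun M : Matrix (Fin (2*n+1) × Fin (2*n+1)) (Fin (2*n+1) × Fin (2*n+1)) K
      => M (a,b) (c,d)), EE_kron_apply, Matrix.zero_apply]
  split_ifs <;> first | rfl | tauto | (exfalso; grind) | simp_all

lemma masterD (P : Fin (2*n+1) → Prop) [∀ i, Decidable (P i)] :
    (∑ i, if P i then EE n i i ⊗ₖ EE n i i else 0) (a,b) (c,d)
      = if a = b ∧ a = c ∧ a = d ∧ P a then 1 else 0 := by
  simp only [Matrix.sum_apply]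
  rw [Finset.sum_eq_single a]
  rotate_left
  · intro i _ hia
    simp [apply_ite (fun M : Matrix (Fin (2*n+1) × Fin (2*n+1)) (Fin (2*n+1) × Fin (2*n+1)) K
      => M (a,b) (c,d)), Matrix.kroneckerMap_apply, EE,
      Matrix.single, Matrix.of_apply, hia]
  · simp
  simp only [apply_ite (fun M : Matrix (Fin (2*n+1) × Fin (2*n+1)) (Fin (2*n+1) × Fin (2*n+1)) K
      => M (a,b) (c,d)), EE_kron_apply, Matrix.zero_apply]
  split_ifs <;> first | rfl | tauto | (exfalso; grind) | simp_all

lemma masterD' (P : Fin (2*n+1) → Prop) [∀ i, Decidable (P i)] :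
    (∑ i, if P i then EE n i i ⊗ₖ EE n i.rev i.rev else 0) (a,b) (c,d)
      = if a = c ∧ a.rev = b ∧ a.rev = d ∧ P a then 1 else 0 := by
  simp only [Matrix.sum_apply]
  rw [Finset.sum_eq_single a]
  rotate_left
  · intro i _ hia
    simp [apply_ite (fun M : Matrix (Fin (2*n+1) × Fin (2*n+1)) (Fin (2*n+1) × Fin (2*n+1)) K
      => M (a,b) (c,d)), Matrix.kroneckerMap_apply, EE,
      Matrix.single, Matrix.of_apply, hia]
  · simp
  simp only [apply_ite (fun M : Matrix (Fin (2*n+1) × Fin (2*n+1)) (Fin (2*n+1) × Fin (2*n+1)) K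
      => M (a,b) (c,d)), EE_kron_apply, Matrix.zero_apply]
  split_ifs <;> first | rfl | tauto | (exfalso; grind) | simp_all

end masters

lemma hbig1 : uu * qq ^ 2 - 1 ≠ 0 := by
  intro h
  apply huq1
  have hq := qq_ne
  calc uu * qq - qq⁻¹ = qq⁻¹ * (uu * qq ^ 2 - 1) := by field_simp
  _ = 0 := by rw [h, mul_zero]

lemma hbig2 : -1 + uu * qq ^ 2 ≠ 0 := by
  intro h; exact hbig1 (by linear_combination h)
theorem statement9 (n : ℕ) (hn : 1 ≤ n) :
    Rbar n uu
      = ∑ i, (if i ≠ i.rev then EE n i i ⊗ₖ EE n i i else 0)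
        + ((uu - 1) / (qq * uu - qq⁻¹)) •
            ∑ i, ∑ j, (if i ≠ j ∧ i ≠ j.rev then EE n i i ⊗ₖ EE n j j else 0)
        + ((qq - qq⁻¹) / (qq * uu - qq⁻¹)) •
            ∑ i, ∑ j, (if j < i ∧ i ≠ j.rev then EE n i j ⊗ₖ EE n j i else 0)
        + ((qq - qq⁻¹) * uu / (qq * uu - qq⁻¹)) •
            ∑ i, ∑ j, (if i < j ∧ i ≠ j.rev then EE n i j ⊗ₖ EE n j i else 0)
        + ((uu - qq ^ (-2 : ℤ)) * (uu - xib n))⁻¹ •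
            ∑ i, ∑ j, aent n i j • (EE n i.rev j.rev ⊗ₖ EE n i j) := by
  have hn' : n < 2*n+1 := by omega
  have hux' := hux (n := n)
  have hq := qq_ne
  ext ⟨a,b⟩ ⟨c,d⟩
  rw [Rbar, Rm, Pm, Qm]
  simp only [Matrix.sub_apply, Matrix.add_apply, Matrix.smul_apply,
    masterA, masterA', masterB, masterB', masterC, masterD, masterD', EE_kron_apply,
    smul_eq_mul]
  have e1 : uu * qq - qq⁻¹ = (uu * qq ^ 2 - 1) / qq := by field_simp
  have e1' : qq * uu - qq⁻¹ = (uu * qq ^ 2 - 1) / qq := by field_simp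
  have e2 : uu - (qq * qq)⁻¹ = (uu * qq ^ 2 - 1) / qq ^ 2 := by field_simp
  by_cases hQ : b.rev = a ∧ d.rev = c
  · obtain ⟨rfl, rfl⟩ := hQ
    by_cases hbd : b = d
    · subst hbd
      by_cases hrb : b.rev = b
      · have hbn : (⟨n, hn'⟩ : Fin (2*n+1)) = b := (mid_eq_iff hn' b).mpr hrb
        subst hbn
        simp only [aent, hm2, mid_eq_iff hn', Fin.rev_rev, Fin.rev_inj, hrb,
          if_true, if_false, eq_self_iff_true, and_true, true_and, and_false, false_and,
          not_true, not_false_iff, ne_eq, lt_self_iff_false, sub_self, zpow_zero,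
          mul_one, mul_zero, zero_mul, one_mul, add_zero, zero_add, sub_zero, ite_true,
          ite_false, not_false_eq_true]
        all_goals simp only [e1, e1', e2]
        all_goals field_simp [hbig1, hux', qq_ne]
        all_goals ring
      · have hrb' : ¬ b = b.rev := fun h => hrb h.symm
        simp only [aent, hm2, mid_eq_iff hn', Fin.rev_rev, Fin.rev_inj, hrb, hrb',
          if_true, if_false, eq_self_iff_true, and_true, true_and, and_false, false_and,
          not_true, not_false_iff, ne_eq, lt_self_iff_false, sub_self, zpow_zero,
          mul_one, mul_zero, zero_mul, one_mul, add_zero, zero_add, sub_zero, ite_true,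
          ite_false, not_false_eq_true]
        all_goals simp only [e1, e1', e2]
        all_goals field_simp [hbig1, hux', qq_ne]
        all_goals ring
    · have hbd' : ¬ d = b := fun h => hbd h.symm
      by_cases hdb : d = b.rev
      · subst hdb
        have hT2s : ¬((⟨n,hn'⟩ : Fin (2*n+1)) = b.rev ∧ (⟨n,hn'⟩ : Fin (2*n+1)) = b ∧
            (⟨n,hn'⟩ : Fin (2*n+1)) = b ∧ (⟨n,hn'⟩ : Fin (2*n+1)) = b.rev) :=
          fun ⟨h1,h2,_,_⟩ => hbd (h2.symm.trans h1)
        rcases lt_or_gt_of_ne hbd with hlt | hlt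
        · have hnlt : ¬ b.rev < b := lt_asymm hlt
          simp only [aent, hm2, hT2s, Fin.rev_rev, Fin.rev_inj, hbd, hbd', hnlt, hlt,
            if_true, if_false, eq_self_iff_true, and_true, true_and, and_false, false_and,
            not_true, not_false_iff, ne_eq, lt_self_iff_false, sub_self, zpow_zero,
            mul_one, mul_zero, zero_mul, one_mul, add_zero, zero_add, sub_zero, ite_true,
            ite_false, not_false_eq_true]
          all_goals simp only [e1, e1', e2]
          all_goals field_simp [hbig1, hux', qq_ne]
          all_goals ring
        · have hnlt : ¬ b < b.rev := lt_asymm hlt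
          simp only [aent, hm2, hT2s, Fin.rev_rev, Fin.rev_inj, hbd, hbd', hnlt, hlt,
            if_true, if_false, eq_self_iff_true, and_true, true_and, and_false, false_and,
            not_true, not_false_iff, ne_eq, lt_self_iff_false, sub_self, zpow_zero,
            mul_one, mul_zero, zero_mul, one_mul, add_zero, zero_add, sub_zero, ite_true,
            ite_false, not_false_eq_true]
          all_goals simp only [e1, e1', e2]
          all_goals field_simp [hbig1, hux', qq_ne]
          all_goals ring
      · have hbdr : ¬ b = d.rev := fun h => hdb (by rw [h, Fin.rev_rev])
        have hT2 : ¬((⟨n,hn'⟩ : Fin (2*n+1)) = b.rev ∧ (⟨n,hn'⟩ : Fin (2*n+1)) = d.rev ∧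
            (⟨n,hn'⟩ : Fin (2*n+1)) = b ∧ (⟨n,hn'⟩ : Fin (2*n+1)) = d) :=
          fun ⟨_,_,h3,h4⟩ => hbd (h3.symm.trans h4)
        by_cases hlt : d < b
        · have hnlt : ¬ b < d := lt_asymm hlt
          simp only [aent, hm2, hT2, Fin.rev_rev, Fin.rev_inj, hbd, hbd', hdb, hbdr, hlt, hnlt,
            if_true, if_false, eq_self_iff_true, and_true, true_and, and_false, false_and,
            not_true, not_false_iff, ne_eq, lt_self_iff_false, sub_self, zpow_zero,
            mul_one, mul_zero, zero_mul, one_mul, add_zero, zero_add, sub_zero, ite_true,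
            ite_false, not_false_eq_true]
          all_goals simp only [e1, e1', e2]
          all_goals field_simp [hbig1, hux', qq_ne]
          all_goals ring
        · have hlt2 : b < d := lt_of_le_of_ne (not_lt.mp hlt) hbd
          simp only [aent, hm2, hT2, Fin.rev_rev, Fin.rev_inj, hbd, hbd', hdb, hbdr, hlt, hlt2,
            if_true, if_false, eq_self_iff_true, and_true, true_and, and_false, false_and,
            not_true, not_false_iff, ne_eq, lt_self_iff_false, sub_self, zpow_zero,
            mul_one, mul_zero, zero_mul, one_mul, add_zero, zero_add, sub_zero, ite_true,
            ite_false, not_false_eq_true]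
          all_goals simp only [e1, e1', e2]
          all_goals field_simp [hbig1, hux', qq_ne]
          all_goals ring
  · have hQ6 : ¬(b.rev = a ∧ d.rev = c ∧ d < b) := fun h => hQ ⟨h.1, h.2.1⟩
    by_cases hD : a = c ∧ b = d
    · obtain ⟨rfl, rfl⟩ := hD
      by_cases hab : a = b
      · subst hab
        have hra : ¬ a.rev = a := fun h => hQ ⟨h, h⟩
        have hra' : ¬ a = a.rev := fun h => hra h.symm
        simp only [aent, hm2, hQ, hQ6, mid_eq_iff hn', Fin.rev_rev, Fin.rev_inj, hra, hra',
          if_true, if_false, eq_self_iff_true, and_true, true_and, and_false, false_and,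
          not_true, not_false_iff, ne_eq, lt_self_iff_false, sub_self, zpow_zero,
          mul_one, mul_zero, zero_mul, one_mul, add_zero, zero_add, sub_zero, ite_true,
          ite_false, not_false_eq_true]
        all_goals simp only [e1, e1', e2]
        all_goals field_simp [hbig1, hux', qq_ne]
        all_goals ring
      · have hab' : ¬ b = a := fun h => hab h.symm
        have habr : ¬ a = b.rev := fun h => hQ ⟨h.symm, h.symm⟩
        have harb : ¬ a.rev = b := fun h => habr (by rw [← h, Fin.rev_rev])
        have hT2 : ¬((⟨n,hn'⟩ : Fin (2*n+1)) = a ∧ (⟨n,hn'⟩ : Fin (2*n+1)) = a ∧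
            (⟨n,hn'⟩ : Fin (2*n+1)) = b ∧ (⟨n,hn'⟩ : Fin (2*n+1)) = b) :=
          fun ⟨h1,_,h3,_⟩ => hab (h1.symm.trans h3)
        simp only [aent, hm2, hQ, hQ6, hT2, Fin.rev_rev, Fin.rev_inj, hab, hab', habr, harb,
          if_true, if_false, eq_self_iff_true, and_true, true_and, and_false, false_and,
          not_true, not_false_iff, ne_eq, lt_self_iff_false, sub_self, zpow_zero,
          mul_one, mul_zero, zero_mul, one_mul, add_zero, zero_add, sub_zero, ite_true,
          ite_false, not_false_eq_true]
        all_goals simp only [e1, e1', e2]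
        all_goals field_simp [hbig1, hux', qq_ne]
        all_goals ring
    · have hT1 : ¬(a = b ∧ a = c ∧ a = d ∧ ¬a = a.rev) :=
        fun ⟨h1,h2,h3,_⟩ => hD ⟨h2, h1.symm.trans h3⟩
      have hT2 : ¬((⟨n,hn'⟩ : Fin (2*n+1)) = a ∧ (⟨n,hn'⟩ : Fin (2*n+1)) = c ∧
          (⟨n,hn'⟩ : Fin (2*n+1)) = b ∧ (⟨n,hn'⟩ : Fin (2*n+1)) = d) :=
        fun ⟨h1,h2,h3,h4⟩ => hD ⟨h1.symm.trans h2, h3.symm.trans h4⟩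
      have hT3 : ¬(a = c ∧ b = d ∧ ¬a = b ∧ ¬a = b.rev) := fun h => hD ⟨h.1, h.2.1⟩
      have hT4 : ¬(a = c ∧ a.rev = b ∧ a.rev = d ∧ ¬a = a.rev) :=
        fun ⟨h1,h2,h3,_⟩ => hD ⟨h1, h2.symm.trans h3⟩
      by_cases hP : d = a ∧ b = c
      · obtain ⟨rfl, rfl⟩ := hP
        have hdb : d ≠ b := fun h => hD ⟨h, h.symm⟩
        have hdbr : ¬ d = b.rev := fun h => hQ ⟨h.symm, by rw [h, Fin.rev_rev]⟩
        rcases lt_or_gt_of_ne hdb with hlt | hlt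
        · have hnlt : ¬ b < d := lt_asymm hlt
          simp only [aent, hm2, hQ, hQ6, hT1, hT2, hT3, hT4, hdb, hdbr, hlt, hnlt,
            if_true, if_false, eq_self_iff_true, and_true, true_and, and_false, false_and,
            not_true, not_false_iff, ne_eq, lt_self_iff_false, sub_self, zpow_zero,
            mul_one, mul_zero, zero_mul, one_mul, add_zero, zero_add, sub_zero, ite_true,
            ite_false, not_false_eq_true]
          all_goals simp only [e1, e1', e2]
          all_goals field_simp [hbig1, hux', qq_ne]
          all_goals ring
        · have hnlt : ¬ d < b := lt_asymm hlt
          simp only [aent, hm2, hQ, hQ6, hT1, hT2, hT3, hT4, hdb, hdbr, hlt, hnlt,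
            if_true, if_false, eq_self_iff_true, and_true, true_and, and_false, false_and,
            not_true, not_false_iff, ne_eq, lt_self_iff_false, sub_self, zpow_zero,
            mul_one, mul_zero, zero_mul, one_mul, add_zero, zero_add, sub_zero, ite_true,
            ite_false, not_false_eq_true]
          all_goals simp only [e1, e1', e2]
          all_goals field_simp [hbig1, hux', qq_ne]
          all_goals ring
      · have hT5 : ¬(d = a ∧ b = c ∧ d < b) := fun h => hP ⟨h.1, h.2.1⟩
        have hU2 : ¬(d = a ∧ b = c ∧ b < d ∧ ¬d = b.rev) := fun h => hP ⟨h.1, h.2.1⟩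
        have hU3 : ¬(d = a ∧ b = c ∧ d < b ∧ ¬d = b.rev) := fun h => hP ⟨h.1, h.2.1⟩
        simp [hQ, hQ6, hT1, hT2, hT3, hT4, hP, hT5, hU2, hU3]

end
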